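/- Every uncountable Gδ subset H of Cantor space 2^ℕ contains a subset homeomorphic to 2^ℕ. -/

import Mathlib

open MeasureTheory in
lemma aux_exists_inj {α : Type*} [TopologicalSpace α] [PolishSpace α]
    [MeasurableSpace α] [BorelSpace α] {H : Set α} (hH : MeasurableSet H)
    (hunc : ¬ H.Countable) :
    ∃ f : (ℕ → Bool) → α, Set.range f ⊆ H ∧ Continuous f ∧ Function.Injective f := by
  obtain ⟨t', t'le, t'polish, hclosed, -⟩ := isClopenable_iff_measurableSet.2 hH
  obtain ⟨f, hrange, hf, hinj⟩ :=
    @IsClosed.exists_nat_bool_injection_of_not_countable α t' t'polish H hclosed hunc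
  refine ⟨f, hrange, ?_, hinj⟩
  rw [continuous_iff_coinduced_le] at hf ⊢
  exact hf.trans t'le

/-- Every uncountable Gδ subset of Cantor space `2^ℕ` contains a subset
homeomorphic to `2^ℕ`. -/
theorem uncountable_gdelta_contains_perfect (H : Set (ℕ → Bool))
    (hH : IsGδ H) (hunc : ¬ H.Countable) :
    ∃ P : Set (ℕ → Bool), P ⊆ H ∧ Nonempty (↥P ≃ₜ (ℕ → Bool)) := by
  have : TopologicalSpace.IsCompletelyMetrizableSpace (ℕ → Bool) := inferInstance
  obtain ⟨f, hrange, hfc, hinj⟩ := aux_exists_inj hH.measurableSet hunc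
  have hemb := hfc.isClosedEmbedding hinj
  exact ⟨Set.range f, hrange, ⟨(Topology.IsEmbedding.toHomeomorph hemb.toIsEmbedding).symm⟩⟩
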